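/- arXiv:0804.3105 — 2 statements merged into one kernel-verified Lean document; each statement's English description precedes it below -/
import Mathlib

section
/- If every state of every component automaton A_i has at most one outgoing transition on each letter (the A_i are deterministic) and a global state s of the product is proper (no ⊤ component), and additionally the only states with outgoing transitions sharing labels across components are ⊤ states, then from s the product has at most one outgoing a-transition for each letter a. -/
/-- Asynchronous product of partial deterministic automata over a common
alphabet `Δ` (each component has at most one outgoing transition per letter). -/
def pdeltaO {n : ℕ} {A : Type*} {Q : Fin n → Type*}
    (δ : ∀ i, Q i → A → Option (Q i)) (s : ∀ i, Q i) (a : A) : Set (∀ i, Q i) :=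
  {t | ∃ i, δ i (s i) a = some (t i) ∧ ∀ j, j ≠ i → t j = s j}

/-- If the component automata are deterministic and the only states sharing
outgoing labels across distinct components are the `⊤` states, then from any
proper global state (no component in `⊤`) the product has at most one outgoing
`a`-transition for each letter `a`. -/
theorem proper_state_deterministic {n : ℕ} {A : Type*} {Q : Fin n → Type*}
    (δ : ∀ i, Q i → A → Option (Q i)) (top : ∀ i, Q i)
    (halmost : ∀ (a : A) (i j : Fin n), i ≠ j →
      (∃ q : Q i, q ≠ top i ∧ (δ i q a).isSome) →
      ∀ q' : Q j, q' ≠ top j → δ j q' a = none)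
    (s : ∀ i, Q i) (hproper : ∀ i, s i ≠ top i) (a : A) :
    (pdeltaO δ s a).Subsingleton := by
  rintro t ⟨i, hi, hrest⟩ t' ⟨i', hi', hrest'⟩
  have hii : i = i' := by
    by_contra hne
    have := halmost a i i' hne ⟨s i, hproper i, by rw [hi]; rfl⟩ (s i') (hproper i')
    rw [this] at hi'
    exact Option.some_ne_none _ hi'.symm
  subst hii
  funext j
  by_cases hj : j = i
  · subst hj
    have := hi.symm.trans hi'
    exact Option.some.inj this
  · rw [hrest j hj, hrest' j hj]
end

section
/- If a configuration (s, t) is reachable in (B, A_1 ⊗ ... ⊗ A_n) by some sequence ρ of product transitions that is not banal, and B is bisimilar to the product with B minimal with respect to bisimulation, then (s, t) is also reachable by a banal sequence: the banal reordering ρ' of ρ (sorting transitions by component index, preserving the relative order within each component) reaches the same product state t, and the state of B reached by ρ' equals s. -/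
inductive APath {Q A : Type*} (δ : Q → A → Set Q) : Q → List A → Q → Prop
  | nil (q : Q) : APath δ q [] q
  | cons {q q' q'' : Q} {a : A} {w : List A} :
      q' ∈ δ q a → APath δ q' w q'' → APath δ q (a :: w) q''

def IsBisim {Q1 Q2 A : Type*} (δ1 : Q1 → A → Set Q1) (δ2 : Q2 → A → Set Q2)
    (R : Q1 → Q2 → Prop) : Prop :=
  ∀ p q, R p q →
    (∀ a, ∀ p' ∈ δ1 p a, ∃ q' ∈ δ2 q a, R p' q') ∧
    (∀ a, ∀ q' ∈ δ2 q a, ∃ p' ∈ δ1 p a, R p' q')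

def Bisimilar {Q1 Q2 A : Type*} (δ1 : Q1 → A → Set Q1) (δ2 : Q2 → A → Set Q2)
    (p : Q1) (q : Q2) : Prop :=
  ∃ R, IsBisim δ1 δ2 R ∧ R p q

def pdelta {n : ℕ} {A : Type*} {Q : Fin n → Type*} (Al : Fin n → Set A)
    (δ : ∀ i, Q i → A → Q i) (s : ∀ i, Q i) (a : A) : Set (∀ i, Q i) :=
  {t | ∃ i, a ∈ Al i ∧ t i = δ i (s i) a ∧ ∀ j, j ≠ i → t j = s j}

def compDelta {n : ℕ} {A : Type*} {Q : Fin n → Type*} (Al : Fin n → Set A)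
    (δ : ∀ i, Q i → A → Q i) (i : Fin n) (s : ∀ i, Q i) (a : A) : Set (∀ i, Q i) :=
  {t | a ∈ Al i ∧ t i = δ i (s i) a ∧ ∀ j, j ≠ i → t j = s j}

/-- `t` is reachable from `s` by a banal sequence labeled by the word `w`:
a block of transitions of component `1`, then component `2`, ..., then
component `n`, with `w` the concatenation of the block labels. -/
def BanalReachW {n : ℕ} {A : Type*} {Q : Fin n → Type*} (Al : Fin n → Set A)
    (δ : ∀ i, Q i → A → Q i) (s t : ∀ i, Q i) (w : List A) : Prop :=
  ∃ (u : Fin (n + 1) → (∀ i, Q i)) (ws : Fin n → List A),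
    u 0 = s ∧ u (Fin.last n) = t ∧
    (∀ i : Fin n, APath (compDelta Al δ i) (u i.castSucc) (ws i) (u i.succ)) ∧
    w = (List.ofFn ws).flatten

theorem APath.append {Q A : Type*} {δ : Q → A → Set Q} {q q' q'' : Q} {w w' : List A}
    (h1 : APath δ q w q') (h2 : APath δ q' w' q'') : APath δ q (w ++ w') q'' := by
  induction h1 with
  | nil => exact h2
  | cons hs _ ih => exact APath.cons hs (ih h2)

theorem APath.mono {Q A : Type*} {δ δ' : Q → A → Set Q} (hm : ∀ q a, δ q a ⊆ δ' q a)
    {q q' : Q} {w : List A} (h : APath δ q w q') : APath δ' q w q' := by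
  induction h with
  | nil => exact APath.nil _
  | cons hs _ ih => exact APath.cons (hm _ _ hs) ih

theorem APath.det {Q A : Type*} {δ : Q → A → Set Q} (hdet : ∀ p a, (δ p a).Subsingleton)
    {q r1 r2 : Q} {w : List A} (h1 : APath δ q w r1) (h2 : APath δ q w r2) : r1 = r2 := by
  induction h1 generalizing r2 with
  | nil => cases h2; rfl
  | cons hs _ ih =>
    cases h2 with
    | cons hs' hp' => exact ih (by rwa [hdet _ _ hs' hs] at hp')

theorem bisim_lift {Q1 Q2 A : Type*} {δ1 : Q1 → A → Set Q1} {δ2 : Q2 → A → Set Q2}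
    {R : Q1 → Q2 → Prop} (hR : IsBisim δ1 δ2 R) {p q t} {w : List A}
    (hpq : R p q) (h : APath δ2 q w t) : ∃ p', APath δ1 p w p' ∧ R p' t := by
  induction h generalizing p with
  | nil => exact ⟨p, APath.nil p, hpq⟩
  | cons hs _ ih =>
    obtain ⟨p', hp', hR'⟩ := (hR _ _ hpq).2 _ _ hs
    obtain ⟨p'', hpath, hR''⟩ := ih hR'
    exact ⟨p'', APath.cons hp' hpath, hR''⟩

theorem compDelta_subset_pdelta {n : ℕ} {A : Type*} {Q : Fin n → Type*} (Al : Fin n → Set A)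
    (δ : ∀ i, Q i → A → Q i) (i : Fin n) (s : ∀ i, Q i) (a : A) :
    compDelta Al δ i s a ⊆ pdelta Al δ s a := fun t ht => ⟨i, ht⟩

-- a compDelta-i path does not change component k ≠ i

theorem compPath_fix {n : ℕ} {A : Type*} {Q : Fin n → Type*} {Al : Fin n → Set A}
    {δ : ∀ i, Q i → A → Q i} {i k : Fin n} (hk : k ≠ i) {p q : ∀ i, Q i} {w : List A}
    (h : APath (compDelta Al δ i) p w q) : q k = p k := by
  induction h with
  | nil => rfl
  | cons hs _ ih => exact ih.trans (hs.2.2 k hk)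

-- updating an untouched component commutes with a compDelta-j path

theorem compPath_update {n : ℕ} {A : Type*} {Q : Fin n → Type*} {Al : Fin n → Set A}
    {δ : ∀ i, Q i → A → Q i} {i j : Fin n} (hij : i ≠ j) (x : Q i) {p q : ∀ i, Q i}
    {w : List A} (h : APath (compDelta Al δ j) p w q) :
    APath (compDelta Al δ j) (Function.update p i x) w (Function.update q i x) := by
  induction h with
  | nil => exact APath.nil _
  | @cons q q' q'' a w hs _ ih =>
    refine APath.cons ⟨hs.1, ?_, ?_⟩ ih
    · rw [Function.update_of_ne (Ne.symm hij), Function.update_of_ne (Ne.symm hij)]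
      exact hs.2.1
    · intro k hk
      by_cases hki : k = i
      · subst hki; simp
      · rw [Function.update_of_ne hki, Function.update_of_ne hki]
        exact hs.2.2 k hk

theorem flatten_update_perm {A : Type*} (n : ℕ) (ws : Fin n → List A) (i : Fin n) (a : A) :
    ((List.ofFn (Function.update ws i (ws i ++ [a]))).flatten).Perm ((List.ofFn ws).flatten ++ [a]) := by
  rw [← Multiset.coe_eq_coe]
  have key : ∀ (f : Fin n → List A), (↑(List.ofFn f).flatten : Multiset A) = ∑ j, (↑(f j) : Multiset A) := by
    intro f
    have h1 : ∀ (L : List (List A)), (↑L.flatten : Multiset A) = (L.map (↑· : List A → Multiset A)).sum := by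
      intro L
      induction L with
      | nil => simp
      | cons h t ih => rw [List.flatten_cons, ← Multiset.coe_add, ih]; simp
    rw [h1, List.map_ofFn, List.sum_ofFn]
    rfl
  have h2 : (↑((List.ofFn ws).flatten ++ [a]) : Multiset A) = ↑(List.ofFn ws).flatten + ↑([a] : List A) := by
    rw [← Multiset.coe_add]
  rw [h2, key, key]
  have h3 : ∀ j : Fin n, (↑(Function.update ws i (ws i ++ [a]) j) : Multiset A)
      = ↑(ws j) + (if j = i then ↑([a] : List A) else 0) := by
    intro j
    by_cases h : j = i
    · subst h; rw [Function.update_self]; simp [← Multiset.coe_add]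
    · simp [Function.update_of_ne h, h]
  rw [Finset.sum_congr rfl (fun j _ => h3 j), Finset.sum_add_distrib]
  simp

theorem banal_snoc {n : ℕ} {A : Type*} {Q : Fin n → Type*} {Al : Fin n → Set A}
    {δ : ∀ i, Q i → A → Q i} {s m m' : ∀ i, Q i} {v : List A} {a : A}
    (h : BanalReachW Al δ s m v) (hstep : m' ∈ pdelta Al δ m a) :
    ∃ v', BanalReachW Al δ s m' v' ∧ (v ++ [a]).Perm v' := by
  obtain ⟨u, ws, hu0, hulast, hblocks, hv⟩ := h
  obtain ⟨i, hAl, hmi, hmj⟩ := hstep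
  have hm' : m' = Function.update m i (δ i (m i) a) := by
    funext j
    by_cases hji : j = i
    · subst hji; rw [Function.update_self]; exact hmi
    · rw [Function.update_of_ne hji]; exact hmj j hji
  -- component i is unchanged after block i
  have hfix : ∀ k : Fin (n + 1), i.succ ≤ k → (u k) i = (u i.succ) i := by
    intro k
    induction k using Fin.induction with
    | zero => intro h; exact absurd h (by simp [Fin.le_def])
    | succ k ih =>
      intro hk
      rcases eq_or_lt_of_le (show i.val ≤ k.val by
        have := hk; rw [Fin.le_def] at this; simpa using Nat.lt_succ_iff.mp this) with he | hl
      · have : i = k := Fin.ext he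
        subst this; rfl
      · have hik : i ≠ k := fun h => absurd (h ▸ hl) (lt_irrefl _)
        have h1 : i.succ ≤ k.castSucc := by rw [Fin.le_def]; simpa using hl
        exact (compPath_fix hik (hblocks k)).trans (ih h1)
  have humi : (u i.succ) i = m i := by
    rw [← hfix (Fin.last n) (Fin.le_last _), hulast]
  set x : Q i := δ i (m i) a with hx
  refine ⟨(List.ofFn (Function.update ws i (ws i ++ [a]))).flatten,
    ⟨fun j => if j ≤ i.castSucc then u j else Function.update (u j) i x,
     Function.update ws i (ws i ++ [a]), ?_, ?_, ?_, rfl⟩, ?_⟩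
  · simp [Fin.zero_le, hu0]
  · show (if Fin.last n ≤ i.castSucc then u (Fin.last n) else Function.update (u (Fin.last n)) i x) = m'
    rw [if_neg (not_le.mpr (Fin.castSucc_lt_last i)), hulast, hm']
  · intro j
    rcases lt_trichotomy j i with hj | hj | hj
    · have h1 : j.castSucc ≤ i.castSucc := by rw [Fin.le_def]; simpa using hj.le
      have h2 : j.succ ≤ i.castSucc := by rw [Fin.le_def]; simpa using hj
      simp only [h1, h2, if_pos]
      rw [Function.update_of_ne (Fin.ne_of_lt hj)]
      exact hblocks j
    · subst hj
      have h1 : j.castSucc ≤ j.castSucc := le_refl _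
      have h2 : ¬ (j.succ ≤ j.castSucc) := by rw [Fin.le_def]; simp
      simp only [if_pos h1, if_neg h2, Function.update_self]
      refine (hblocks j).append (APath.cons ?_ (APath.nil _))
      refine ⟨hAl, ?_, ?_⟩
      · rw [Function.update_self, humi]
      · intro k hk; rw [Function.update_of_ne hk]
    · have h1 : ¬ (j.castSucc ≤ i.castSucc) := by rw [Fin.le_def]; simpa using hj
      have h2 : ¬ (j.succ ≤ i.castSucc) := by
        rw [Fin.le_def]; simp only [Fin.val_succ, Fin.coe_castSucc, not_le]
        have := Fin.lt_def.mp hj; omega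
      simp only [if_neg h1, if_neg h2]
      rw [Function.update_of_ne (Fin.ne_of_gt hj)]
      exact compPath_update (Fin.ne_of_lt hj) x (hblocks j)
  · rw [hv]
    exact (flatten_update_perm n ws i a).symm

theorem banal_path {n : ℕ} {A : Type*} {Q : Fin n → Type*} {Al : Fin n → Set A}
    {δ : ∀ i, Q i → A → Q i} {s t : ∀ i, Q i} {w : List A}
    (h : BanalReachW Al δ s t w) : APath (pdelta Al δ) s w t := by
  obtain ⟨u, ws, hu0, hulast, hblocks, hw⟩ := h
  have key : ∀ k : Fin (n + 1), APath (pdelta Al δ) (u 0) (((List.ofFn ws).take k.val).flatten) (u k) := by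
    intro k
    induction k using Fin.induction with
    | zero => exact APath.nil _
    | succ k ih =>
      have htake : (List.ofFn ws).take (k.val + 1) = (List.ofFn ws).take k.val ++ [ws k] := by
        rw [List.take_succ]
        congr 1
        have hk : k.val < (List.ofFn ws).length := by simp [k.isLt]
        rw [List.getElem?_eq_getElem hk]
        simp
      simp only [Fin.val_succ, htake, List.flatten_append, List.flatten_cons, List.flatten_nil,
        List.append_nil]
      exact (ih).append (((hblocks k).mono (compDelta_subset_pdelta Al δ k)))
  have := key (Fin.last n)
  rw [Fin.val_last, List.take_of_length_le (by simp)] at this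
  rw [hu0, hulast] at this
  rw [hw]
  exact this

theorem path_banal {n : ℕ} {A : Type*} {Q : Fin n → Type*} {Al : Fin n → Set A}
    {δ : ∀ i, Q i → A → Q i} {s m t : ∀ i, Q i} {w v : List A}
    (h : APath (pdelta Al δ) m w t) (hb : BanalReachW Al δ s m v) :
    ∃ w', BanalReachW Al δ s t w' ∧ (v ++ w).Perm w' := by
  induction h generalizing v with
  | nil => exact ⟨v, hb, by simp⟩
  | @cons q q' q'' a w hs _ ih =>
    obtain ⟨v1, hb1, hp1⟩ := banal_snoc hb hs
    obtain ⟨w', hb', hp'⟩ := ih hb1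
    refine ⟨w', hb', ?_⟩
    have h1 : v ++ a :: w = (v ++ [a]) ++ w := by simp
    rw [h1]
    exact (hp1.append_right w).trans hp'

/-- If `B` (deterministic, minimal w.r.t. bisimulation) is bisimilar to the
product and the configuration `(s, t)` is reachable by a word `w`, then `(s, t)`
is also reachable by a banal sequence: some reordering `w'` of `w` reaches `t`
banally in the product and reaches the same state `s` in `B`. -/
theorem reachable_config_banally_reachable {n : ℕ} {A QB : Type*}
    {Q : Fin n → Type*} (Al : Fin n → Set A) (δ : ∀ i, Q i → A → Q i)
    (δB : QB → A → Set QB) (s0 : QB) (init : ∀ i, Q i)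
    (hBdet : ∀ p a, (δB p a).Subsingleton)
    (hmin : ∀ s1 s2 : QB, Bisimilar δB δB s1 s2 → s1 = s2)
    (hbisim : Bisimilar δB (pdelta Al δ) s0 init)
    (w : List A) (s : QB) (t : ∀ i, Q i)
    (hB : APath δB s0 w s) (hP : APath (pdelta Al δ) init w t) :
    ∃ w' : List A, w.Perm w' ∧ BanalReachW Al δ init t w' ∧ APath δB s0 w' s := by
  obtain ⟨R, hR, hR0⟩ := hbisim
  have hbnil : BanalReachW Al δ init init [] :=
    ⟨fun _ => init, fun _ => [], rfl, rfl, fun _ => APath.nil _, by simp⟩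
  obtain ⟨w', hb', hperm⟩ := path_banal hP hbnil
  simp only [List.nil_append] at hperm
  have hPt' : APath (pdelta Al δ) init w' t := banal_path hb'
  obtain ⟨s1, hpath1, hRs1⟩ := bisim_lift hR hR0 hP
  have hs1 : s1 = s := APath.det hBdet hpath1 hB
  have hRst : R s t := hs1 ▸ hRs1
  obtain ⟨s2, hpath2, hRs2⟩ := bisim_lift hR hR0 hPt'
  have hSbisim : IsBisim δB δB (fun x y => ∃ z, R x z ∧ R y z) := by
    rintro x y ⟨z, hxz, hyz⟩
    constructor
    · intro a x' hx'
      obtain ⟨z', hz', hx'z'⟩ := (hR x z hxz).1 a x' hx'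
      obtain ⟨y', hy', hy'z'⟩ := (hR y z hyz).2 a z' hz'
      exact ⟨y', hy', z', hx'z', hy'z'⟩
    · intro a y' hy'
      obtain ⟨z', hz', hy'z'⟩ := (hR y z hyz).1 a y' hy'
      obtain ⟨x', hx', hx'z'⟩ := (hR x z hxz).2 a z' hz'
      exact ⟨x', hx', z', hx'z', hy'z'⟩
  have hs2 : s2 = s := hmin s2 s ⟨_, hSbisim, ⟨t, hRs2, hRst⟩⟩
  exact ⟨w', hperm, hb', hs2 ▸ hpath2⟩
end
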